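/- Let $p_{(1)} \ge \cdots \ge p_{(n)}$ be fixed probabilities in $[0,1]$, and let $X_{(1)},\dots,X_{(n)}$ be independent Bernoulli random variables with $\Pr[X_{(i)}=1]=p_{(i)}$. For $k \le n-2$ with $k=2\ell+1$, let $q_k = \Pr[\sum_{i=1}^k X_{(i)} > k/2]$ and let $\mathcal{E}_k^j$ denote the event that exactly $j$ of $X_{(1)},\dots,X_{(k)}$ equal $1$. Then $q_{k+2} - q_k = \Pr[\mathcal{E}_k^{\ell}]\cdot p_{(k+1)}p_{(k+2)} - \Pr[\mathcal{E}_k^{\ell+1}]\cdot(1-p_{(k+1)})(1-p_{(k+2)})$. -/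

import Mathlib

open Finset

/-- `w p k S` is the probability that, among independent Bernoulli variables
`X_0, …, X_{k-1}` with `Pr[X_i = 1] = p i`, exactly the variables indexed by `S`
equal `1` (and those in `range k \ S` equal `0`). -/
noncomputable def bernWeight (p : ℕ → ℝ) (k : ℕ) (S : Finset ℕ) : ℝ :=
  (∏ i ∈ S, p i) * ∏ i ∈ (range k) \ S, (1 - p i)

/-- `prExactly p k j` is the probability that exactly `j` of the first `k`
independent Bernoulli variables equal `1`. -/
noncomputable def prExactly (p : ℕ → ℝ) (k j : ℕ) : ℝ :=
  ∑ S ∈ (range k).powerset.filter (fun S => S.card = j), bernWeight p k S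

/-- `prMajority p k` is the probability that a strict majority of the first `k`
independent Bernoulli variables equal `1`. -/
noncomputable def prMajority (p : ℕ → ℝ) (k : ℕ) : ℝ :=
  ∑ S ∈ (range k).powerset.filter (fun S => k < 2 * S.card), bernWeight p k S

lemma sdiff1 (k : ℕ) (T : Finset ℕ) (hT : T ⊆ range k) :
    range (k+2) \ T = insert (k+1) (insert k (range k \ T)) := by
  ext x
  have h1 : x ∈ T → x < k := fun h => mem_range.mp (hT h)
  by_cases hxT : x ∈ T
  · have := h1 hxT; simp [hxT] <;> omega
  · simp [hxT] <;> omega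

lemma sdiff2 (k : ℕ) (T : Finset ℕ) (hT : T ⊆ range k) :
    range (k+2) \ insert k T = insert (k+1) (range k \ T) := by
  ext x
  have h1 : x ∈ T → x < k := fun h => mem_range.mp (hT h)
  by_cases hxT : x ∈ T
  · have := h1 hxT; simp [hxT] <;> omega
  · simp [hxT] <;> omega

lemma sdiff3 (k : ℕ) (T : Finset ℕ) (hT : T ⊆ range k) :
    range (k+2) \ insert (k+1) T = insert k (range k \ T) := by
  ext x
  have h1 : x ∈ T → x < k := fun h => mem_range.mp (hT h)
  by_cases hxT : x ∈ T
  · have := h1 hxT; simp [hxT] <;> omega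
  · simp [hxT] <;> omega

lemma sdiff4 (k : ℕ) (T : Finset ℕ) (hT : T ⊆ range k) :
    range (k+2) \ insert (k+1) (insert k T) = range k \ T := by
  ext x
  have h1 : x ∈ T → x < k := fun h => mem_range.mp (hT h)
  by_cases hxT : x ∈ T
  · have := h1 hxT; simp [hxT] <;> omega
  · simp [hxT] <;> omega

lemma notmem_k {k : ℕ} {T : Finset ℕ} (hT : T ⊆ range k) : k ∉ T :=
  fun h => absurd (mem_range.mp (hT h)) (lt_irrefl k)

lemma notmem_k1 {k : ℕ} {T : Finset ℕ} (hT : T ⊆ range k) : k + 1 ∉ T :=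
  fun h => by have := mem_range.mp (hT h); omega

lemma bw0 (p : ℕ → ℝ) (k : ℕ) (T : Finset ℕ) (hT : T ⊆ range k) :
    bernWeight p (k+2) T = ((1 - p k) * (1 - p (k+1))) * bernWeight p k T := by
  unfold bernWeight
  rw [sdiff1 k T hT, prod_insert (by simp), prod_insert (by simp)]
  ring

lemma bw1 (p : ℕ → ℝ) (k : ℕ) (T : Finset ℕ) (hT : T ⊆ range k) :
    bernWeight p (k+2) (insert k T) = (p k * (1 - p (k+1))) * bernWeight p k T := by
  unfold bernWeight
  rw [sdiff2 k T hT, prod_insert (notmem_k hT), prod_insert (by simp)]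
  ring

lemma bw2 (p : ℕ → ℝ) (k : ℕ) (T : Finset ℕ) (hT : T ⊆ range k) :
    bernWeight p (k+2) (insert (k+1) T) = ((1 - p k) * p (k+1)) * bernWeight p k T := by
  unfold bernWeight
  rw [sdiff3 k T hT, prod_insert (notmem_k1 hT), prod_insert (by simp)]
  ring

lemma bw3 (p : ℕ → ℝ) (k : ℕ) (T : Finset ℕ) (hT : T ⊆ range k) :
    bernWeight p (k+2) (insert (k+1) (insert k T)) = (p k * p (k+1)) * bernWeight p k T := by
  unfold bernWeight
  rw [sdiff4 k T hT, prod_insert (by simp [notmem_k1 hT]), prod_insert (notmem_k hT)]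
  ring

/-- for sorted probabilities `p 0 ≥ p 1 ≥ ⋯ ≥ p (n-1)` in `[0,1]`
and odd `k = 2ℓ+1` with `k + 2 ≤ n`,
`q_{k+2} - q_k = Pr[𝓔_k^ℓ]·p_{(k+1)}p_{(k+2)} - Pr[𝓔_k^{ℓ+1}]·(1-p_{(k+1)})(1-p_{(k+2)})`
(with 0-indexing, the two newly added voters have parameters `p k` and `p (k+1)`). -/
theorem stmt0 (n k ℓ : ℕ) (p : ℕ → ℝ)
    (hp : ∀ i, i < n → p i ∈ Set.Icc (0 : ℝ) 1)
    (hsorted : ∀ i j, i ≤ j → j < n → p j ≤ p i)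
    (hk : k = 2 * ℓ + 1) (hkn : k + 2 ≤ n) :
    prMajority p (k + 2) - prMajority p k
      = prExactly p k ℓ * (p k * p (k + 1))
        - prExactly p k (ℓ + 1) * ((1 - p k) * (1 - p (k + 1))) := by
  have hrng : range (k+2) = insert (k+1) (insert k (range k)) := by
    rw [range_add_one, range_add_one]
  have hmaj2 : prMajority p (k+2)
      = ∑ T ∈ (range k).powerset,
          (((if k + 2 < 2 * T.card then bernWeight p (k+2) T else 0)
            + (if k + 2 < 2 * (insert k T).card then bernWeight p (k+2) (insert k T) else 0))
          + ((if k + 2 < 2 * (insert (k+1) T).card then bernWeight p (k+2) (insert (k+1) T) else 0)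
            + (if k + 2 < 2 * (insert (k+1) (insert k T)).card then
                bernWeight p (k+2) (insert (k+1) (insert k T)) else 0))) := by
    rw [prMajority, sum_filter, hrng,
      sum_powerset_insert (by simp) _,
      sum_powerset_insert (by simp) _,
      sum_powerset_insert (by simp) _,
      ]
    simp only [← sum_add_distrib]
  rw [hmaj2, prMajority, prExactly, prExactly, sum_filter, sum_filter, sum_filter,
    sum_mul, sum_mul, ← sum_sub_distrib, ← sum_sub_distrib]
  apply sum_congr rfl
  intro T hT
  have hTs : T ⊆ range k := mem_powerset.mp hT
  have hkT : k ∉ T := notmem_k hTs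
  have hk1T : k + 1 ∉ T := notmem_k1 hTs
  have hc1 : (insert k T).card = T.card + 1 := card_insert_of_notMem hkT
  have hc2 : (insert (k+1) T).card = T.card + 1 := card_insert_of_notMem hk1T
  have hc3 : (insert (k+1) (insert k T)).card = T.card + 2 := by
    rw [card_insert_of_notMem (by simp [hk1T]), hc1]
  rw [bw0 p k T hTs, bw1 p k T hTs, bw2 p k T hTs, bw3 p k T hTs, hc1, hc2, hc3]
  subst hk
  split_ifs <;> first | omega | ring
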